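/- Let Ω be an infinite set and let f, g be partial bijections of Ω such that the range of g is all of Ω, the domain of f is all of Ω, the complement in Ω of the range of f has cardinality |Ω|, and the complement in Ω of the domain of g has cardinality |Ω|. Then for every partial bijection h of Ω there exists a permutation a of Ω (a bijection from Ω to Ω) such that h = f ∘ a ∘ g (composing left to right: first f, then a, then g). -/

import Mathlib

lemma exists_perm_comp {Ω : Type*} (u v : Ω → Ω) (hu : Function.Injective u)
    (hv : Function.Injective v)
    (hc : Cardinal.mk ↥((Set.range u)ᶜ) = Cardinal.mk ↥((Set.range v)ᶜ)) :
    ∃ a : Equiv.Perm Ω, ∀ x, a (u x) = v x := by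
  classical
  obtain ⟨eC⟩ := Cardinal.eq.mp hc
  refine ⟨(Equiv.Set.sumCompl (Set.range u)).symm.trans
    ((Equiv.sumCongr ((Equiv.ofInjective u hu).symm.trans (Equiv.ofInjective v hv)) eC).trans
      (Equiv.Set.sumCompl (Set.range v))), fun x => ?_⟩
  have hm : u x ∈ Set.range u := ⟨x, rfl⟩
  have h1 : (Equiv.Set.sumCompl (Set.range u)).symm (u x) = Sum.inl ⟨u x, hm⟩ :=
    Equiv.Set.sumCompl_symm_apply_of_mem hm
  simp [h1, Equiv.ofInjective_symm_apply, Equiv.ofInjective_apply]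

/-- A partial function `Ω →. Ω` is a partial bijection if it is injective on its domain. -/
def IsPartialBij {Ω : Type*} (f : Ω →. Ω) : Prop :=
  ∀ ⦃x y z : Ω⦄, z ∈ f x → z ∈ f y → x = y

/-- The symmetric inverse semigroup `I_Ω`: the type of all partial bijections of `Ω`. -/
def PartialBij (Ω : Type*) : Type _ :=
  {f : Ω →. Ω // IsPartialBij f}

/-- Composition of partial bijections, written left-to-right: `f * g` means apply `f` first,
then `g`. -/
instance (Ω : Type*) : Semigroup (PartialBij Ω) where
  mul f g := ⟨g.1.comp f.1, by
    intro x y z hx hy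
    rw [PFun.comp_apply] at hx hy
    obtain ⟨u, hu, hzu⟩ := Part.mem_bind_iff.1 hx
    obtain ⟨v, hv, hzv⟩ := Part.mem_bind_iff.1 hy
    have huv : u = v := g.2 hzu hzv
    subst huv
    exact f.2 hu hv⟩
  mul_assoc a b c := Subtype.ext (PFun.comp_assoc c.1 b.1 a.1).symm

/-- A permutation of `Ω`, viewed as a (total) partial bijection of `Ω`. -/
def Equiv.Perm.toPartialBij {Ω : Type*} (a : Equiv.Perm Ω) : PartialBij Ω :=
  ⟨fun x => Part.some (a x), by
    intro x y z hx hy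
    rw [Part.mem_some_iff] at hx hy
    exact a.injective (hx ▸ hy)⟩

/-- If `f, g` are partial bijections of an infinite set `Ω` such that the range of `g` is all
of `Ω`, the domain of `f` is all of `Ω`, and the complements of the range of `f` and of the
domain of `g` both have cardinality `|Ω|`, then every partial bijection `h` of `Ω` factors as
`h = f * a * g` (left-to-right composition: first `f`, then `a`, then `g`) for some
permutation `a` of `Ω`. -/
theorem exists_perm_factorization_of_partialBij
    (Ω : Type*) [Infinite Ω] (f g : PartialBij Ω)
    (hg_ran : g.1.ran = Set.univ) (hf_dom : f.1.Dom = Set.univ)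
    (hf_ran : Cardinal.mk ↥(f.1.ranᶜ) = Cardinal.mk Ω)
    (hg_dom : Cardinal.mk ↥(g.1.Domᶜ) = Cardinal.mk Ω) :
    ∀ h : PartialBij Ω, ∃ a : Equiv.Perm Ω, h = f * a.toPartialBij * g := by
  classical
  intro h
  -- F : totalization of f
  have hfd : ∀ x : Ω, (f.1 x).Dom := fun x => by
    have : x ∈ f.1.Dom := hf_dom ▸ Set.mem_univ x
    exact this
  set F : Ω → Ω := fun x => (f.1 x).get (hfd x) with hF
  have hFmem : ∀ x, F x ∈ f.1 x := fun x => Part.get_mem _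
  have hFsome : ∀ x, f.1 x = Part.some (F x) := fun x => (Part.some_get (hfd x)).symm
  have hFinj : Function.Injective F := by
    intro x y hxy
    exact f.2 (hFmem x) (hxy ▸ hFmem y)
  have hFran : Set.range F = f.1.ran := by
    ext y
    constructor
    · rintro ⟨x, rfl⟩; exact ⟨x, hFmem x⟩
    · rintro ⟨x, hx⟩; exact ⟨x, Part.mem_unique (hFmem x) hx⟩
  -- Ginv : inverse of g
  have hgsur : ∀ y : Ω, ∃ x, y ∈ g.1 x := fun y => (hg_ran ▸ Set.mem_univ y : y ∈ g.1.ran)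
  set Ginv : Ω → Ω := fun y => Classical.choose (hgsur y) with hGinv
  have hGspec : ∀ y, y ∈ g.1 (Ginv y) := fun y => Classical.choose_spec (hgsur y)
  have hGinj : Function.Injective Ginv := by
    intro y1 y2 hy
    exact Part.mem_unique (hGspec y1) (hy ▸ hGspec y2)
  have hGran : Set.range Ginv = g.1.Dom := by
    ext w
    constructor
    · rintro ⟨y, rfl⟩; exact Part.dom_iff_mem.mpr ⟨y, hGspec y⟩
    · intro hw
      have hy : (g.1 w).get hw ∈ g.1 w := Part.get_mem _
      exact ⟨(g.1 w).get hw, g.2 (hGspec _) hy⟩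
  have hGsome : ∀ y, g.1 (Ginv y) = Part.some y := fun y =>
    Part.eq_some_iff.mpr (hGspec y)
  -- a splitting injection into (Dom g)ᶜ
  have hsum : Cardinal.mk (Ω ⊕ Ω) = Cardinal.mk ↥(g.1.Domᶜ) := by
    rw [hg_dom]
    simp [Cardinal.mk_sum, Cardinal.add_eq_self (Cardinal.aleph0_le_mk Ω)]
  obtain ⟨q⟩ := Cardinal.eq.mp hsum
  -- define v
  set v : Ω → Ω := fun x =>
    if hx : (h.1 x).Dom then Ginv ((h.1 x).get hx) else (q (Sum.inl x)).val with hv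
  have hvnotdom : ∀ x, ¬ (h.1 x).Dom → v x ∈ g.1.Domᶜ := by
    intro x hx
    simp only [hv, dif_neg hx]
    exact (q (Sum.inl x)).2
  have hvdom : ∀ x (hx : (h.1 x).Dom), v x = Ginv ((h.1 x).get hx) := by
    intro x hx; simp only [hv, dif_pos hx]
  have hvinj : Function.Injective v := by
    intro x y hxy
    by_cases hx : (h.1 x).Dom <;> by_cases hy' : (h.1 y).Dom
    · rw [hvdom x hx, hvdom y hy'] at hxy
      have := hGinj hxy
      exact h.2 (Part.get_mem hx) (this ▸ Part.get_mem hy')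
    · exfalso
      have h1 : v x ∈ g.1.Dom := hvdom x hx ▸ (hGran ▸ Set.mem_range_self _)
      exact (hvnotdom y hy') (hxy ▸ h1)
    · exfalso
      have h1 : v y ∈ g.1.Dom := hvdom y hy' ▸ (hGran ▸ Set.mem_range_self _)
      exact (hvnotdom x hx) (hxy ▸ h1)
    · simp only [hv, dif_neg hx, dif_neg hy'] at hxy
      exact Sum.inl_injective (q.injective (Subtype.ext hxy))
  -- complement of range v has cardinality Ω
  have hW : Cardinal.mk ↥((Set.range v)ᶜ) = Cardinal.mk Ω := by
    refine le_antisymm (Cardinal.mk_set_le _) ?_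
    set W : Set Ω := Set.range (fun x : Ω => (q (Sum.inr x)).val) with hWdef
    have hWsub : W ⊆ (Set.range v)ᶜ := by
      rintro w ⟨x, rfl⟩ ⟨y, hy⟩
      by_cases hyd : (h.1 y).Dom
      · have h1 : v y ∈ g.1.Dom := hvdom y hyd ▸ (hGran ▸ Set.mem_range_self _)
        have hy' : v y = (q (Sum.inr x)).val := hy
        exact (q (Sum.inr x)).2 (hy' ▸ h1)
      · simp only [hv, dif_neg hyd] at hy
        have := q.injective (Subtype.ext hy)
        simp at this
    have hWinj : Function.Injective (fun x : Ω => (q (Sum.inr x)).val) := by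
      intro x y hxy
      exact Sum.inr_injective (q.injective (Subtype.ext hxy))
    calc Cardinal.mk Ω = Cardinal.mk ↥W := (Cardinal.mk_range_eq _ hWinj).symm
      _ ≤ _ := Cardinal.mk_le_mk_of_subset hWsub
  -- get the permutation
  obtain ⟨a, ha⟩ := exists_perm_comp F v hFinj hvinj (by
    rw [hW]
    rw [show (Set.range F)ᶜ = f.1.ranᶜ by rw [hFran]]
    exact hf_ran)
  refine ⟨a, ?_⟩
  apply Subtype.ext
  have hmul : (f * a.toPartialBij * g).1 = g.1.comp ((a.toPartialBij).1.comp f.1) := rfl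
  rw [hmul]
  funext x
  have hstep : ((a.toPartialBij).1.comp f.1) x = Part.some (v x) := by
    rw [PFun.comp_apply, hFsome x]; refine (Part.bind_some _ _).trans ?_
    show Part.some (a (F x)) = Part.some (v x)
    rw [ha x]
  rw [PFun.comp_apply, hstep]; refine Eq.trans ?_ (Part.bind_some _ _).symm
  by_cases hx : (h.1 x).Dom
  · rw [hvdom x hx, hGsome, Part.some_get]
  · have h1 : v x ∉ g.1.Dom := hvnotdom x hx
    rw [Part.eq_none_iff'.mpr hx, Part.eq_none_iff'.mpr h1]
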